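/- Let K be a field, S = K[x_1,...,x_n], F ⊆ [n] a nonempty subset, J the ideal generated by all monomials x_i x_j with i,j ∈ F and i < j, and x = Σ_{i∈F} x_i. Then for any i ∈ F there is a K-algebra isomorphism (S/J)/x(S/J) ≅ S_i/Q², where S_i = K[x_1,...,x_{i-1},x_{i+1},...,x_n] and Q is the ideal of S_i generated by the variables x_j with j ∈ F, j ≠ i. -/

import Mathlib

set_option maxHeartbeats 1000000
set_option synthInstance.maxHeartbeats 400000

open MvPolynomial

/-- Let `F ⊆ [n]` be nonempty, `J ⊆ S = K[x_1,…,x_n]` the ideal generated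
by the monomials `x_i x_j` with `i, j ∈ F`, `i < j`, and `x = ∑_{i ∈ F} x_i`.  Then for any
`i ∈ F` there is a `K`-algebra isomorphism `(S/J)/x(S/J) ≅ S_i/Q²`, where `S_i` is the
polynomial ring on the variables `x_j`, `j ≠ i`, and `Q = ({x_j : j ∈ F, j ≠ i})`. -/
theorem quot_by_sum_iso (K : Type*) [Field K] {n : ℕ} (F : Finset (Fin n))
    (hF : F.Nonempty) (J : Ideal (MvPolynomial (Fin n) K))
    (hJ : J = Ideal.span {p | ∃ i ∈ F, ∃ j ∈ F, i < j ∧ p = X i * X j})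
    (i : Fin n) (hi : i ∈ F)
    (Q : Ideal (MvPolynomial {j : Fin n // j ≠ i} K))
    (hQ : Q = Ideal.span {p | ∃ j : {j : Fin n // j ≠ i}, (j : Fin n) ∈ F ∧ p = X j}) :
    Nonempty
      (((MvPolynomial (Fin n) K ⧸ J) ⧸
          Ideal.span {Ideal.Quotient.mk J (∑ j ∈ F, X j)}) ≃ₐ[K]
        (MvPolynomial {j : Fin n // j ≠ i} K ⧸ Q ^ 2)) := by
  classical
  set S := MvPolynomial (Fin n) K
  set Si := MvPolynomial {j : Fin n // j ≠ i} K
  set x : S := ∑ j ∈ F, X j with hx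
  -- the substitution map
  set v : Fin n → Si := fun k =>
    if h : k = i then -∑ j ∈ (F.erase i).attach, X (⟨j.1, Finset.ne_of_mem_erase j.2⟩ : {j : Fin n // j ≠ i})
    else X (⟨k, h⟩ : {j : Fin n // j ≠ i}) with hv
  set φ : S →ₐ[K] Si := aeval v with hφ
  set σ : Si →ₐ[K] S := aeval (fun j => X (j : Fin n)) with hσ
  have hvne : ∀ (k : Fin n) (h : k ≠ i), v k = X (⟨k, h⟩ : {j : Fin n // j ≠ i}) := by
    intro k h; simp [hv, h]
  have hvi : v i = -∑ j ∈ (F.erase i).attach,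
      X (⟨j.1, Finset.ne_of_mem_erase j.2⟩ : {j : Fin n // j ≠ i}) := by
    simp [hv]
  -- v maps members of F into Q
  have hvQ : ∀ k ∈ F, v k ∈ Q := by
    intro k hk
    by_cases h : k = i
    · subst h
      rw [hvi]
      refine neg_mem (Ideal.sum_mem _ fun j _ => ?_)
      rw [hQ]
      exact Ideal.subset_span ⟨_, Finset.mem_of_mem_erase j.2, rfl⟩
    · rw [hvne k h, hQ]
      exact Ideal.subset_span ⟨⟨k, h⟩, hk, rfl⟩
  -- φ kills x
  have hφx : φ x = 0 := by
    rw [hx, map_sum, ← Finset.add_sum_erase _ _ hi]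
    have : ∑ j ∈ F.erase i, φ (X j) = ∑ j ∈ (F.erase i).attach,
        X (⟨j.1, Finset.ne_of_mem_erase j.2⟩ : {j : Fin n // j ≠ i}) := by
      rw [← Finset.sum_attach (F.erase i) (fun j => φ (X j))]
      refine Finset.sum_congr rfl fun j _ => ?_
      show (aeval v) (X j.1) = _
      rw [aeval_X]; exact hvne _ _
    rw [this]
    show (aeval v) (X i) + _ = 0
    rw [aeval_X, hvi]; ring
  -- products of F-variables lie in T
  set T : Ideal S := J ⊔ Ideal.span {x} with hT
  have hprod : ∀ a ∈ F, ∀ b ∈ F, X a * X b ∈ T := by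
    have hJT : ∀ a ∈ F, ∀ b ∈ F, a ≠ b → X a * X b ∈ J := by
      intro a ha b hb hab
      rcases lt_or_gt_of_ne hab with h | h
      · rw [hJ]; exact Ideal.subset_span ⟨a, ha, b, hb, h, rfl⟩
      · rw [hJ, mul_comm]; exact Ideal.subset_span ⟨b, hb, a, ha, h, rfl⟩
    intro a ha b hb
    by_cases hab : a = b
    · subst hab
      have : X a * X a = X a * x - ∑ j ∈ F.erase a, X a * X j := by
        rw [hx, Finset.mul_sum, ← Finset.add_sum_erase _ _ ha]; ring
      rw [this]
      refine sub_mem ?_ (Ideal.sum_mem _ fun j hj => ?_)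
      · exact Ideal.mem_sup_right (Ideal.mul_mem_left _ _ (Ideal.subset_span rfl))
      · exact Ideal.mem_sup_left
          (hJT a ha j (Finset.mem_of_mem_erase hj) (Finset.ne_of_mem_erase hj).symm)
    · exact Ideal.mem_sup_left (hJT a ha b hb hab)
  -- σ ∘ φ is identity mod span {x}
  have hsec : ∀ f : S, f - σ (φ f) ∈ Ideal.span {x} := by
    have key : (Ideal.Quotient.mkₐ K (Ideal.span {x})).comp (σ.comp φ) =
        Ideal.Quotient.mkₐ K (Ideal.span {x}) := by
      apply MvPolynomial.algHom_ext
      intro k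
      by_cases h : k = i
      · rw [h]
        have h1 : φ (X i) = v i := by rw [hφ, aeval_X]
        have h2 : σ (v i) = -∑ j ∈ F.erase i, X j := by
          rw [hvi, map_neg, map_sum, neg_inj,
            ← Finset.sum_attach (F.erase i) (fun j => (X j : S))]
          exact Finset.sum_congr rfl fun j _ => by rw [hσ, aeval_X]
        simp only [AlgHom.comp_apply, h1, h2, Ideal.Quotient.mkₐ_eq_mk]
        rw [Ideal.Quotient.eq]
        have h3 : (-∑ j ∈ F.erase i, X j) - (X i : S) = -x := by
          rw [hx, ← Finset.add_sum_erase _ _ hi]; ring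
        rw [h3]
        exact neg_mem (Ideal.subset_span rfl)
      · have h1 : φ (X k) = X (⟨k, h⟩ : {j : Fin n // j ≠ i}) := by
          rw [hφ, aeval_X]; exact hvne k h
        simp only [AlgHom.comp_apply, h1, hσ, Ideal.Quotient.mkₐ_eq_mk]
        exact congrArg _ (aeval_X (f := fun j : {j : Fin n // j ≠ i} => (X (j : Fin n) : S)) ⟨k, h⟩)
    intro f
    have := congrArg (fun g => g f) (congrArg DFunLike.coe key)
    simp only [AlgHom.comp_apply, Ideal.Quotient.mkₐ_eq_mk] at this
    rw [← Ideal.Quotient.eq]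
    exact this.symm
  -- the map to Si / Q^2
  set ψ : S →ₐ[K] Si ⧸ Q ^ 2 := (Ideal.Quotient.mkₐ K (Q ^ 2)).comp φ with hψ
  have hφσ : ∀ g : Si, φ (σ g) = g := by
    have heq : φ.comp σ = AlgHom.id K Si := by
      apply MvPolynomial.algHom_ext; intro j
      have h1 : σ (X j) = X (j : Fin n) :=
        aeval_X (f := fun j : {j : Fin n // j ≠ i} => (X (j : Fin n) : S)) j
      have h2 : φ (X (j : Fin n)) = X j := by
        rw [hφ, aeval_X, hvne (j : Fin n) j.2]
      simp only [AlgHom.comp_apply, h1, h2, AlgHom.id_apply]; rfl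
    intro g
    exact congrArg (fun h => h g) (congrArg DFunLike.coe heq)
  have hψsurj : Function.Surjective ψ := by
    intro y
    obtain ⟨g, rfl⟩ := Ideal.Quotient.mk_surjective y
    exact ⟨σ g, by rw [hψ, AlgHom.comp_apply, hφσ, Ideal.Quotient.mkₐ_eq_mk]⟩
  have hker : RingHom.ker ψ = T := by
    refine le_antisymm ?_ ?_
    · intro f hf
      have hfQ : φ f ∈ Q ^ 2 := by
        rw [RingHom.mem_ker, hψ, AlgHom.comp_apply, Ideal.Quotient.mkₐ_eq_mk,
          Ideal.Quotient.eq_zero_iff_mem] at hf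
        exact hf
      have h1 : σ (φ f) ∈ Ideal.map σ.toRingHom (Q ^ 2) :=
        Ideal.mem_map_of_mem _ hfQ
      have hmapQ : Ideal.map σ.toRingHom Q ≤ Ideal.span {p : S | ∃ a ∈ F, p = X a} := by
        rw [hQ, Ideal.map_span, Ideal.span_le]
        rintro p ⟨q, ⟨j, hjF, rfl⟩, rfl⟩
        refine Ideal.subset_span ⟨(j : Fin n), hjF, ?_⟩
        exact aeval_X (f := fun j : {j : Fin n // j ≠ i} => (X (j : Fin n) : S)) j
      have hsq : (Ideal.span {p : S | ∃ a ∈ F, p = X a}) ^ 2 ≤ T := by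
        rw [pow_two, Ideal.span_mul_span', Ideal.span_le]
        rintro p hp
        rw [Set.mem_mul] at hp
        obtain ⟨p1, ⟨a, ha, rfl⟩, p2, ⟨b, hb, rfl⟩, rfl⟩ := hp
        exact hprod a ha b hb
      have h2 : Ideal.map σ.toRingHom (Q ^ 2) ≤ T := by
        rw [Ideal.map_pow]
        refine le_trans ?_ hsq
        rw [pow_two, pow_two]
        exact mul_le_mul' hmapQ hmapQ
      have : f = (f - σ (φ f)) + σ (φ f) := by ring
      rw [this]
      exact add_mem (Ideal.mem_sup_right (hsec f)) (h2 h1)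
    · rw [hT]
      refine sup_le ?_ ?_
      · rw [hJ, Ideal.span_le]
        rintro p ⟨a, ha, b, hb, hab, rfl⟩
        rw [SetLike.mem_coe, RingHom.mem_ker, hψ, AlgHom.comp_apply, map_mul,
          Ideal.Quotient.mkₐ_eq_mk, Ideal.Quotient.eq_zero_iff_mem]
        have h1 : φ (X a) = v a := by rw [hφ, aeval_X]
        have h2 : φ (X b) = v b := by rw [hφ, aeval_X]
        rw [h1, h2, pow_two]
        exact Ideal.mul_mem_mul (hvQ a ha) (hvQ b hb)
      · rw [Ideal.span_le]
        rintro p rfl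
        rw [SetLike.mem_coe, RingHom.mem_ker, hψ, AlgHom.comp_apply, hφx, map_zero]
  -- assemble the isomorphism
  have hmap : Ideal.span {Ideal.Quotient.mk J x} =
      Ideal.map (Ideal.Quotient.mkₐ K J) (Ideal.span {x}) := by
    rw [Ideal.map_span, Set.image_singleton, Ideal.Quotient.mkₐ_eq_mk]
  exact ⟨((Ideal.quotientEquivAlgOfEq K hmap).trans
      (DoubleQuot.quotQuotEquivQuotSupₐ K J (Ideal.span {x}))).trans
    (((Ideal.quotientEquivAlgOfEq K (hT.trans hker.symm)).trans
      (Ideal.quotientKerAlgEquivOfSurjective hψsurj)))⟩
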